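/- Let H be an inner product space over ℂ, n ≥ 1, x₁,…,xₙ ∈ H, a ∈ H, r ≥ 0 with ‖xₖ − a‖ ≤ r for all k. Then ‖∑ₖ k²·xₖ − ((n+1)(2n+1)/6)·∑ₖ xₖ‖ ≤ (rn/(6√5))·√((n−1)(n+1)(2n+1)(8n+11)). -/

import Mathlib

open Finset

lemma sum_sq_field {K : Type*} [Field K] [CharZero K] (n : ℕ) :
    ∑ k ∈ Icc 1 n, (k : K) ^ 2 = (n : K) * ((n : K) + 1) * (2 * (n : K) + 1) / 6 := by
  induction n with
  | zero => simp
  | succ m ih =>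
    rw [Finset.sum_Icc_succ_top (by omega), ih]
    push_cast; ring

lemma sum_q4_real (n : ℕ) :
    ∑ k ∈ Icc 1 n, (k : ℝ) ^ 4
      = (n : ℝ) * ((n : ℝ) + 1) * (2 * (n : ℝ) + 1) * (3 * (n : ℝ) ^ 2 + 3 * (n : ℝ) - 1) / 30 := by
  induction n with
  | zero => simp
  | succ m ih =>
    rw [Finset.sum_Icc_succ_top (by omega), ih]
    push_cast; ring

theorem mellin_moment_two_approx {H : Type*} [NormedAddCommGroup H] [InnerProductSpace ℂ H]
    (n : ℕ) (hn : 1 ≤ n) (x : ℕ → H) (a : H) (r : ℝ) (hr : 0 ≤ r)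
    (hx : ∀ k ∈ Finset.Icc 1 n, ‖x k - a‖ ≤ r) :
    ‖∑ k ∈ Finset.Icc 1 n, ((k : ℂ) ^ 2) • x k
        - ((((n : ℂ) + 1) * (2 * (n : ℂ) + 1) / 6)) • ∑ k ∈ Finset.Icc 1 n, x k‖
      ≤ r * (n : ℝ) / (6 * Real.sqrt 5)
          * Real.sqrt (((n : ℝ) - 1) * ((n : ℝ) + 1) * (2 * (n : ℝ) + 1)
              * (8 * (n : ℝ) + 11)) := by
  set c : ℝ := ((n : ℝ) + 1) * (2 * (n : ℝ) + 1) / 6 with hc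
  set cC : ℂ := ((n : ℂ) + 1) * (2 * (n : ℂ) + 1) / 6 with hcC
  set P : ℝ := ((n : ℝ) - 1) * ((n : ℝ) + 1) * (2 * (n : ℝ) + 1) * (8 * (n : ℝ) + 11) with hP
  have hn1 : (1 : ℝ) ≤ (n : ℝ) := by exact_mod_cast hn
  -- ∑ coefficients = 0
  have hC : ∑ k ∈ Icc 1 n, ((k : ℂ) ^ 2 - cC) = 0 := by
    rw [Finset.sum_sub_distrib, sum_sq_field, Finset.sum_const, Nat.card_Icc,
      Nat.add_sub_cancel, nsmul_eq_mul, hcC]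
    ring
  -- rewrite of the vector
  have hvec : ∑ k ∈ Finset.Icc 1 n, ((k : ℂ) ^ 2) • x k - cC • ∑ k ∈ Finset.Icc 1 n, x k
      = ∑ k ∈ Icc 1 n, ((k : ℂ) ^ 2 - cC) • (x k - a) := by
    rw [eq_comm]
    calc ∑ k ∈ Icc 1 n, ((k : ℂ) ^ 2 - cC) • (x k - a)
        = ∑ k ∈ Icc 1 n, (((k : ℂ) ^ 2) • x k - cC • x k - ((k : ℂ) ^ 2 - cC) • a) := by
          refine Finset.sum_congr rfl fun k _ => ?_
          rw [smul_sub, sub_smul]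
      _ = ∑ k ∈ Finset.Icc 1 n, ((k : ℂ) ^ 2) • x k - cC • ∑ k ∈ Finset.Icc 1 n, x k := by
          rw [Finset.sum_sub_distrib, Finset.sum_sub_distrib, ← Finset.sum_smul, hC,
            zero_smul, sub_zero, Finset.smul_sum]
  rw [hvec]
  -- triangle inequality
  have h1 : ‖∑ k ∈ Icc 1 n, ((k : ℂ) ^ 2 - cC) • (x k - a)‖
      ≤ r * ∑ k ∈ Icc 1 n, |(k : ℝ) ^ 2 - c| := by
    calc ‖∑ k ∈ Icc 1 n, ((k : ℂ) ^ 2 - cC) • (x k - a)‖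
        ≤ ∑ k ∈ Icc 1 n, ‖((k : ℂ) ^ 2 - cC) • (x k - a)‖ := norm_sum_le _ _
      _ ≤ ∑ k ∈ Icc 1 n, |(k : ℝ) ^ 2 - c| * r := by
          refine Finset.sum_le_sum fun k hk => ?_
          rw [norm_smul]
          have hcast : ((k : ℂ) ^ 2 - cC) = ((((k : ℝ) ^ 2 - c : ℝ)) : ℂ) := by
            rw [hcC, hc]; push_cast; ring
          rw [hcast, Complex.norm_real, Real.norm_eq_abs]
          exact mul_le_mul_of_nonneg_left (hx k hk) (abs_nonneg _)
      _ = r * ∑ k ∈ Icc 1 n, |(k : ℝ) ^ 2 - c| := by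
          rw [← Finset.sum_mul, mul_comm]
  -- Cauchy-Schwarz
  have hCS : (∑ k ∈ Icc 1 n, |(k : ℝ) ^ 2 - c|) ^ 2
      ≤ (n : ℝ) * ∑ k ∈ Icc 1 n, ((k : ℝ) ^ 2 - c) ^ 2 := by
    have := Finset.sum_mul_sq_le_sq_mul_sq (Icc 1 n) (fun _ => (1 : ℝ))
      (fun k => |(k : ℝ) ^ 2 - c|)
    simpa [Finset.sum_const, Nat.card_Icc, Nat.add_sub_cancel, sq_abs] using this
  -- closed form for the variance
  have hE : (n : ℝ) * ∑ k ∈ Icc 1 n, ((k : ℝ) ^ 2 - c) ^ 2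
      = ((n : ℝ) / (6 * Real.sqrt 5)) ^ 2 * P := by
    have expand : ∑ k ∈ Icc 1 n, ((k : ℝ) ^ 2 - c) ^ 2
        = (∑ k ∈ Icc 1 n, (k : ℝ) ^ 4) - (2 * c) * (∑ k ∈ Icc 1 n, (k : ℝ) ^ 2)
          + (n : ℝ) * c ^ 2 := by
      have h : ∀ k ∈ Icc 1 n, ((k : ℝ) ^ 2 - c) ^ 2
          = (k : ℝ) ^ 4 - (2 * c) * (k : ℝ) ^ 2 + c ^ 2 := fun k _ => by ring
      rw [Finset.sum_congr rfl h, Finset.sum_add_distrib, Finset.sum_sub_distrib,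
        ← Finset.mul_sum, Finset.sum_const, Nat.card_Icc, Nat.add_sub_cancel, nsmul_eq_mul]
    have h5 : ((n : ℝ) / (6 * Real.sqrt 5)) ^ 2 = (n : ℝ) ^ 2 / 180 := by
      rw [div_pow, mul_pow, Real.sq_sqrt (by norm_num : (0 : ℝ) ≤ 5)]
      norm_num
    rw [expand, sum_sq_field, sum_q4_real, h5, hP, hc]
    ring
  have hPnn : 0 ≤ P := by
    rw [hP]
    have h1 : (0:ℝ) ≤ (n : ℝ) - 1 := by linarith
    positivity
  have hq : 0 ≤ (n : ℝ) / (6 * Real.sqrt 5) := by positivity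
  have hsum : ∑ k ∈ Icc 1 n, |(k : ℝ) ^ 2 - c|
      ≤ (n : ℝ) / (6 * Real.sqrt 5) * Real.sqrt P := by
    have h2 := Real.sqrt_le_sqrt hCS
    rw [Real.sqrt_sq (Finset.sum_nonneg fun k _ => abs_nonneg _)] at h2
    calc ∑ k ∈ Icc 1 n, |(k : ℝ) ^ 2 - c|
        ≤ Real.sqrt ((n : ℝ) * ∑ k ∈ Icc 1 n, ((k : ℝ) ^ 2 - c) ^ 2) := h2
      _ = (n : ℝ) / (6 * Real.sqrt 5) * Real.sqrt P := by
          rw [hE, Real.sqrt_mul (sq_nonneg _), Real.sqrt_sq hq]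
  calc ‖∑ k ∈ Icc 1 n, ((k : ℂ) ^ 2 - cC) • (x k - a)‖
      ≤ r * ∑ k ∈ Icc 1 n, |(k : ℝ) ^ 2 - c| := h1
    _ ≤ r * ((n : ℝ) / (6 * Real.sqrt 5) * Real.sqrt P) :=
        mul_le_mul_of_nonneg_left hsum hr
    _ = r * (n : ℝ) / (6 * Real.sqrt 5) * Real.sqrt P := by ring
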